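/- arXiv:2008.03281 — 3 statements merged into one kernel-verified Lean document; each statement's English description precedes it below -/
import Mathlib

section
/- For every unit vector ξ ∈ ℝ³ and every vector a ∈ ℝ³, conjugating the cross-product matrix by the orthogonal projection Π_ξ = id − ξξᵀ gives Π_ξ [a]_× Π_ξ = ⟨a, ξ⟩ [ξ]_×. -/
/-- The cross-product matrix `[f]ₓ` of a vector `f ∈ ℝ³`. -/
def crossMatrix (f : Fin 3 → ℝ) : Matrix (Fin 3) (Fin 3) ℝ :=
  !![0, -f 2, f 1; f 2, 0, -f 0; -f 1, f 0, 0]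

/-- For a unit vector `ξ` and any `a ∈ ℝ³`, conjugating the cross-product matrix by the
orthogonal projection `Π_ξ = id − ξξᵀ` gives `Π_ξ [a]ₓ Π_ξ = ⟨a,ξ⟩ [ξ]ₓ`. -/
theorem projection_conj_crossMatrix (ξ : Fin 3 → ℝ) (hξ : ∑ i, ξ i * ξ i = 1)
    (a : Fin 3 → ℝ) :
    (1 - Matrix.vecMulVec ξ ξ) * crossMatrix a * (1 - Matrix.vecMulVec ξ ξ)
      = (∑ i, a i * ξ i) • crossMatrix ξ := by
  rw [Fin.sum_univ_three] at hξ ⊢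
  ext i j
  fin_cases i <;> fin_cases j <;>
    simp [crossMatrix, Matrix.mul_apply, Matrix.vecMulVec_apply, Fin.sum_univ_three,
      Matrix.one_apply, Matrix.sub_apply, Matrix.smul_apply] <;>
    first
      | ring1
      | linear_combination (a 2) * hξ
      | linear_combination (-(a 2)) * hξ
      | linear_combination (a 1) * hξ
      | linear_combination (-(a 1)) * hξ
      | linear_combination (a 0) * hξ
      | linear_combination (-(a 0)) * hξ
end

section
/- Let f : ℝ³ → ℝ³ be a Schwartz vector field, and let [f]_× denote the pointwise cross-product matrix field. Then the transverse ray transform of [f]_× equals the longitudinal ray transform of f times the cross-product matrix of the direction: J([f]_×)(ξ, x) = (If)(ξ, x) · [ξ]_×, where (If)(ξ, x) = ∫_ℝ ⟨f(x + tξ), ξ⟩ dt. -/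
open MeasureTheory

lemma pointwise_key (a ξ : Fin 3 → ℝ) (hξ : ∑ i, ξ i * ξ i = 1) :
    ((1 - Matrix.vecMulVec ξ ξ) * crossMatrix a * (1 - Matrix.vecMulVec ξ ξ))
      = (∑ i, a i * ξ i) • crossMatrix ξ := by
  simp only [Fin.sum_univ_three] at hξ ⊢
  ext i j
  fin_cases i <;> fin_cases j <;>
    simp [crossMatrix, Matrix.mul_apply, Matrix.vecMulVec, Matrix.sub_apply,
      Matrix.one_apply, Fin.sum_univ_three, Matrix.smul_apply] <;>
    first
      | linear_combination a 0 * hξ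
      | linear_combination (-a 0) * hξ
      | linear_combination a 1 * hξ
      | linear_combination (-a 1) * hξ
      | linear_combination a 2 * hξ
      | linear_combination (-a 2) * hξ
      | linear_combination 2 * a 2 * hξ
      | linear_combination (-2 * a 2) * hξ
      | linear_combination 2 * a 1 * hξ
      | linear_combination (-2 * a 1) * hξ
      | linear_combination 2 * a 0 * hξ
      | linear_combination (-2 * a 0) * hξ
      | ring

/-- The transverse ray transform of the cross-product matrix field `[f]ₓ` equals the
longitudinal ray transform of `f` times `[ξ]ₓ`:
`J([f]ₓ)(ξ,x) = (If)(ξ,x) · [ξ]ₓ`. -/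
theorem TRT_crossMatrix_eq_LRT
    (f : (Fin 3 → ℝ) → (Fin 3 → ℝ))
    (hf : ∀ x ξ i, Integrable (fun t : ℝ => f (x + t • ξ) i))
    (ξ : Fin 3 → ℝ) (hξ : ∑ i, ξ i * ξ i = 1)
    (x : Fin 3 → ℝ) (hx : ∑ i, x i * ξ i = 0) :
    (Matrix.of fun k l => ∫ t : ℝ,
        ((1 - Matrix.vecMulVec ξ ξ) * crossMatrix (f (x + t • ξ)) *
          (1 - Matrix.vecMulVec ξ ξ)) k l)
      = (∫ t : ℝ, ∑ i, f (x + t • ξ) i * ξ i) • crossMatrix ξ := by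
  ext k l
  have h1 : ∀ t : ℝ,
      ((1 - Matrix.vecMulVec ξ ξ) * crossMatrix (f (x + t • ξ)) *
        (1 - Matrix.vecMulVec ξ ξ)) k l
      = (∑ i, f (x + t • ξ) i * ξ i) * crossMatrix ξ k l := by
    intro t
    rw [pointwise_key _ _ hξ]
    simp [Matrix.smul_apply]
  simp only [Matrix.of_apply, h1, Matrix.smul_apply, smul_eq_mul]
  rw [integral_mul_const]
end

section
/- Let f : ℝ² → ℝ be even (f(−k) = f(k)) with compact support, and let q_j ∈ ℝ² for j in a finite index set J. Define D(k) = |E_j f(k − q_j)|² (with E_j the average over J). Then the center of mass of D, namely (∫ k D(k) dk)/(∫ D(k) dk), equals E_{j,j'}[(q_j + q_{j'})/2 · F₀(q_j − q_{j'})] / E_{j,j'}[F₀(q_j − q_{j'})] where F₀(c) = ∫ f(k − c/2) f(k + c/2) dk, provided the denominator is nonzero. In particular, if the random variables (q_j + q_{j'})/2 and q_j − q_{j'} over uniformly random pairs (j, j') are independent, then the center of mass equals E_j[q_j]. -/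
open MeasureTheory

/-- Centre of mass of `D(k) = |E_j f(k − q_j)|²` for an even compactly supported `f`:
it equals `E_{j,j'}[(q_j+q_{j'})/2 · F₀(q_j−q_{j'})] / E_{j,j'}[F₀(q_j−q_{j'})]` with
`F₀(c) = ∫ f(k−c/2) f(k+c/2) dk`; if moreover `(q_j+q_{j'})/2` and `F₀(q_j−q_{j'})` are
independent (their averages factorize), the centre of mass is `E_j q_j`. -/
theorem center_of_mass_of_averaged_spots
    {n : ℕ} (hn : 0 < n)
    (f : (Fin 2 → ℝ) → ℝ) (hcont : Continuous f) (hsupp : HasCompactSupport f)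
    (heven : ∀ k, f (-k) = f k)
    (q : Fin n → (Fin 2 → ℝ))
    (D : (Fin 2 → ℝ) → ℝ)
    (hD : ∀ k, D k = ((n : ℝ)⁻¹ * ∑ j, f (k - q j)) ^ 2)
    (F₀ : (Fin 2 → ℝ) → ℝ)
    (hF₀ : ∀ c, F₀ c = ∫ k : Fin 2 → ℝ, f (k - (1/2 : ℝ) • c) * f (k + (1/2 : ℝ) • c))
    (hden : (((n : ℝ) ^ 2)⁻¹ * ∑ j, ∑ j', F₀ (q j - q j')) ≠ 0) :
    ((∫ k : Fin 2 → ℝ, D k)⁻¹ • ∫ k : Fin 2 → ℝ, D k • k)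
      = (((n : ℝ) ^ 2)⁻¹ * ∑ j, ∑ j', F₀ (q j - q j'))⁻¹ •
          (((n : ℝ) ^ 2)⁻¹ • ∑ j, ∑ j', F₀ (q j - q j') • ((1/2 : ℝ) • (q j + q j'))) ∧
    ((((n : ℝ) ^ 2)⁻¹ • ∑ j, ∑ j', F₀ (q j - q j') • ((1/2 : ℝ) • (q j + q j')))
        = (((n : ℝ) ^ 2)⁻¹ * ∑ j, ∑ j', F₀ (q j - q j')) •
          (((n : ℝ) ^ 2)⁻¹ • ∑ j, ∑ j', (1/2 : ℝ) • (q j + q j')) →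
      ((∫ k : Fin 2 → ℝ, D k)⁻¹ • ∫ k : Fin 2 → ℝ, D k • k)
        = (n : ℝ)⁻¹ • ∑ j, q j) := by
    -- continuity / support facts
  have hcont' : ∀ a : Fin 2 → ℝ, Continuous fun k : Fin 2 → ℝ => f (k - a) :=
    fun a => hcont.comp (continuous_id.sub continuous_const)
  have hcs' : ∀ a : Fin 2 → ℝ, HasCompactSupport fun k : Fin 2 → ℝ => f (k - a) :=
    fun a => hsupp.comp_homeomorph (Homeomorph.subRight a)
  have hgc : ∀ a b : Fin 2 → ℝ, Continuous fun k => f (k - a) * f (k - b) :=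
    fun a b => (hcont' a).mul (hcont' b)
  have hgcs : ∀ a b : Fin 2 → ℝ, HasCompactSupport fun k => f (k - a) * f (k - b) :=
    fun a b => (hcs' a).mul_right
  have hgint : ∀ a b : Fin 2 → ℝ, Integrable fun k => f (k - a) * f (k - b) :=
    fun a b => (hgc a b).integrable_of_hasCompactSupport (hgcs a b)
  have hgkc : ∀ a b : Fin 2 → ℝ, Continuous fun k => (f (k - a) * f (k - b)) • k :=
    fun a b => (hgc a b).smul continuous_id
  have hgkcs : ∀ a b : Fin 2 → ℝ, HasCompactSupport fun k => (f (k - a) * f (k - b)) • k :=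
    fun a b => (hgcs a b).smul_right
  have hgkint : ∀ a b : Fin 2 → ℝ, Integrable fun k => (f (k - a) * f (k - b)) • k :=
    fun a b => (hgkc a b).integrable_of_hasCompactSupport (hgkcs a b)
  -- key 1 : translation-invariance
  have key1 : ∀ a b : Fin 2 → ℝ, (∫ k : Fin 2 → ℝ, f (k - a) * f (k - b)) = F₀ (a - b) := by
    intro a b
    rw [hF₀, ← integral_add_right_eq_self (fun k => f (k - a) * f (k - b)) ((1/2:ℝ) • (a + b))]
    congr 1; funext k
    rw [show k + (1/2:ℝ) • (a + b) - a = k - (1/2:ℝ) • (a - b) by module,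
        show k + (1/2:ℝ) • (a + b) - b = k + (1/2:ℝ) • (a - b) by module]
  -- odd integral vanishes
  have keyodd : ∀ c : Fin 2 → ℝ,
      (∫ k : Fin 2 → ℝ, (f (k - (1/2:ℝ) • c) * f (k + (1/2:ℝ) • c)) • k) = 0 := by
    intro c
    set h : (Fin 2 → ℝ) → (Fin 2 → ℝ) :=
      fun k => (f (k - (1/2:ℝ) • c) * f (k + (1/2:ℝ) • c)) • k with hh
    have hneg : ∀ k, h (-k) = - h k := by
      intro k
      simp only [hh]
      rw [show -k - (1/2:ℝ) • c = -(k + (1/2:ℝ) • c) by module,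
          show -k + (1/2:ℝ) • c = -(k - (1/2:ℝ) • c) by module, heven, heven,
          smul_neg, mul_comm]
    have h1 : (∫ k, h k) = - ∫ k, h k := by
      conv_lhs => rw [← integral_neg_eq_self h volume]
      simp only [hneg, integral_neg]
    have h2 : (∫ k, h k) + (∫ k, h k) = 0 := by
      nth_rewrite 1 [h1]; simp
    have := smul_eq_zero (r := (2:ℝ)) (m := ∫ k, h k)
    rw [two_smul] at this
    rcases this.mp h2 with h | h
    · norm_num at h
    · exact h
  -- key 2
  have key2 : ∀ a b : Fin 2 → ℝ,
      (∫ k : Fin 2 → ℝ, (f (k - a) * f (k - b)) • k) = F₀ (a - b) • ((1/2:ℝ) • (a + b)) := by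
    intro a b
    rw [← integral_add_right_eq_self (fun k => (f (k - a) * f (k - b)) • k) ((1/2:ℝ) • (a + b))]
    have : ∀ k : Fin 2 → ℝ,
        (f (k + (1/2:ℝ) • (a + b) - a) * f (k + (1/2:ℝ) • (a + b) - b)) • (k + (1/2:ℝ) • (a + b))
          = (f (k - (1/2:ℝ) • (a - b)) * f (k + (1/2:ℝ) • (a - b))) • k
            + (f (k - (1/2:ℝ) • (a - b)) * f (k + (1/2:ℝ) • (a - b))) • ((1/2:ℝ) • (a + b)) := by
      intro k
      rw [show k + (1/2:ℝ) • (a + b) - a = k - (1/2:ℝ) • (a - b) by module,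
          show k + (1/2:ℝ) • (a + b) - b = k + (1/2:ℝ) • (a - b) by module, smul_add]
    simp only [this]
    rw [integral_add, keyodd, zero_add, integral_smul_const, ← hF₀]
    · have h1 : Integrable fun k : Fin 2 → ℝ =>
          (f (k - (1/2:ℝ) • (a - b)) * f (k + (1/2:ℝ) • (a - b))) • k := by
        have hc : Continuous fun k : Fin 2 → ℝ =>
            f (k - (1/2:ℝ) • (a - b)) * f (k + (1/2:ℝ) • (a - b)) :=
          (hcont.comp (continuous_id.sub continuous_const)).mul
            (hcont.comp (continuous_id.add continuous_const))
        have hcs : HasCompactSupport fun k : Fin 2 → ℝ =>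
            f (k - (1/2:ℝ) • (a - b)) * f (k + (1/2:ℝ) • (a - b)) :=
          ((hsupp.comp_homeomorph (Homeomorph.subRight ((1/2:ℝ) • (a - b))))).mul_right
        exact (hc.smul continuous_id).integrable_of_hasCompactSupport hcs.smul_right
      exact h1
    · have hc : Continuous fun k : Fin 2 → ℝ =>
          f (k - (1/2:ℝ) • (a - b)) * f (k + (1/2:ℝ) • (a - b)) :=
        (hcont.comp (continuous_id.sub continuous_const)).mul
          (hcont.comp (continuous_id.add continuous_const))
      have hcs : HasCompactSupport fun k : Fin 2 → ℝ =>
          f (k - (1/2:ℝ) • (a - b)) * f (k + (1/2:ℝ) • (a - b)) :=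
        ((hsupp.comp_homeomorph (Homeomorph.subRight ((1/2:ℝ) • (a - b))))).mul_right
      exact (hc.integrable_of_hasCompactSupport hcs).smul_const _
  -- rewrite D
  have hD2 : ∀ k, D k = ((n:ℝ)^2)⁻¹ * ∑ j, ∑ j', f (k - q j) * f (k - q j') := by
    intro k
    rw [hD, ← Finset.sum_mul_sum]
    ring
  -- the two integrals
  have hI0 : (∫ k : Fin 2 → ℝ, D k) = ((n:ℝ)^2)⁻¹ * ∑ j, ∑ j', F₀ (q j - q j') := by
    simp only [hD2]
    rw [integral_const_mul]
    congr 1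
    rw [integral_finset_sum _ (fun j _ => integrable_finset_sum _ (fun j' _ => hgint _ _))]
    refine Finset.sum_congr rfl fun j _ => ?_
    rw [integral_finset_sum _ (fun j' _ => hgint _ _)]
    exact Finset.sum_congr rfl fun j' _ => key1 _ _
  have hI1 : (∫ k : Fin 2 → ℝ, D k • k)
      = ((n:ℝ)^2)⁻¹ • ∑ j, ∑ j', F₀ (q j - q j') • ((1/2:ℝ) • (q j + q j')) := by
    have hfun : (fun k : Fin 2 → ℝ => D k • k)
        = fun k => ((n:ℝ)^2)⁻¹ • ∑ j, ∑ j', (f (k - q j) * f (k - q j')) • k := by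
      funext k
      rw [hD2 k, mul_smul]
      congr 1
      rw [Finset.sum_smul]
      exact Finset.sum_congr rfl fun j _ => Finset.sum_smul
    rw [hfun, integral_smul]
    congr 1
    rw [integral_finset_sum _ (fun j _ => integrable_finset_sum _ (fun j' _ => hgkint _ _))]
    refine Finset.sum_congr rfl fun j _ => ?_
    rw [integral_finset_sum _ (fun j' _ => hgkint _ _)]
    exact Finset.sum_congr rfl fun j' _ => key2 _ _
  refine ⟨by rw [hI0, hI1], ?_⟩
  intro h
  rw [hI0, hI1, h, inv_smul_smul₀ hden]
  have hn0 : (n:ℝ) ≠ 0 := Nat.cast_ne_zero.mpr hn.ne'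
  have hm : (∑ j : Fin n, ∑ j' : Fin n, (1/2:ℝ) • (q j + q j')) = (n:ℝ) • ∑ j, q j := by
    have : ∀ j : Fin n, (∑ j' : Fin n, (1/2:ℝ) • (q j + q j'))
        = (1/2:ℝ) • ((n:ℝ) • q j + ∑ j', q j') := by
      intro j
      rw [← Finset.smul_sum, Finset.sum_add_distrib, Finset.sum_const, Finset.card_univ,
        Fintype.card_fin, Nat.cast_smul_eq_nsmul ℝ]
    simp only [this]
    rw [← Finset.smul_sum, Finset.sum_add_distrib, ← Finset.smul_sum, Finset.sum_const,
      Finset.card_univ, Fintype.card_fin, Nat.cast_smul_eq_nsmul ℝ, Finset.smul_sum]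
    rw [← Finset.smul_sum]
    module
  rw [hm, smul_smul]
  congr 1
  field_simp
end
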